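/- Let Λ be an index type and (K_λ)_{λ∈Λ} a family of locally compact Hausdorff spaces. Suppose that for each λ there is a family (u_{λ,i})_{i∈I_λ} in C₀(K_λ) satisfying the reconstruction formula in norm: for every x ∈ C₀(K_λ), the family (u_{λ,i}·conj(u_{λ,i})·x)_{i∈I_λ} is summable in the norm of C₀(K_λ) with sum x. Let K = ⨆_{λ∈Λ} K_λ be the topological disjoint union and let x_{λ,i} ∈ C₀(K) be the extension of u_{λ,i} by zero outside K_λ. Then the combined family (x_{λ,i})_{(λ,i)} satisfies the reconstruction formula in C₀(K): for every x ∈ C₀(K), the family (x_{λ,i}·conj(x_{λ,i})·x)_{(λ,i)} is summable in the norm of C₀(K) with sum x; in particular, it is a normalized standard frame for C₀(K) (bounds c₁ = c₂ = 1). -/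

import Mathlib

open ZeroAtInfty

namespace ReconAux

open ZeroAtInftyContinuousMap Filter Set

variable {α : Type*} [TopologicalSpace α]

lemma continuous_eval (t : α) : Continuous (fun f : C₀(α, ℂ) => f t) := by
  have h1 : Continuous (fun f : BoundedContinuousFunction α ℂ => f t) :=
    continuous_eval_const t
  have h2 : Continuous (ZeroAtInftyContinuousMap.toBCF : C₀(α, ℂ) → BoundedContinuousFunction α ℂ) :=
    (ZeroAtInftyContinuousMap.isometry_toBCF (α := α) (β := ℂ)).continuous
  exact h1.comp h2

/-- Evaluation at a point as an additive monoid hom. -/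
noncomputable def evalHom (t : α) : C₀(α, ℂ) →+ ℂ :=
  AddMonoidHom.mk' (fun f => f t) (fun _ _ => rfl)

lemma hasSum_apply {ι : Type*} {f : ι → C₀(α, ℂ)} {a : C₀(α, ℂ)}
    (h : HasSum f a) (t : α) : HasSum (fun i => f i t) (a t) :=
  h.map (evalHom t) (continuous_eval t)

lemma sum_apply {ι : Type*} (s : Finset ι) (f : ι → C₀(α, ℂ)) (t : α) :
    (∑ i ∈ s, f i) t = ∑ i ∈ s, f i t :=
  map_sum (evalHom t) f s

lemma norm_apply_le (f : C₀(α, ℂ)) (t : α) : ‖f t‖ ≤ ‖f‖ := by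
  rw [← ZeroAtInftyContinuousMap.norm_toBCF_eq_norm]
  exact f.toBCF.norm_coe_le_norm t

lemma norm_le_of_forall {f : C₀(α, ℂ)} {C : ℝ} (h0 : 0 ≤ C) (h : ∀ t, ‖f t‖ ≤ C) :
    ‖f‖ ≤ C := by
  rw [← ZeroAtInftyContinuousMap.norm_toBCF_eq_norm]
  exact (BoundedContinuousFunction.norm_le h0).mpr h

lemma exists_one_at [LocallyCompactSpace α] [T2Space α] (t : α) :
    ∃ v : C₀(α, ℂ), v t = 1 := by
  obtain ⟨g, hg1, -, hgc, -⟩ := exists_continuous_one_zero_of_isCompact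
    (isCompact_singleton : IsCompact {t}) isClosed_empty (Set.disjoint_empty _)
  refine ⟨⟨⟨fun s => (g s : ℂ), Complex.continuous_ofReal.comp g.continuous⟩, ?_⟩, ?_⟩
  · exact (hgc.comp_left Complex.ofReal_zero).is_zero_at_infty
  · have : g t = 1 := hg1 rfl
    simp [this]

end ReconAux

open ReconAux

set_option maxHeartbeats 1000000 in
set_option synthInstance.maxHeartbeats 400000 in
/-- Let `(K λ)` be a family of locally compact Hausdorff spaces, and for each `λ` let
`(u λ i)` be a family in `C₀(K λ)` satisfying the reconstruction formula in norm:
for every `v ∈ C₀(K λ)`, the family `(u λ i · conj (u λ i) · v)` is summable in the norm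
of `C₀(K λ)` with sum `v`. Let `K = ⨆ λ, K λ` be the topological disjoint union and
`x' λ i ∈ C₀(K)` the extension of `u λ i` by zero. Then the combined family satisfies the
reconstruction formula in `C₀(K)`; in particular it is a normalized standard frame for
`C₀(K)` (bounds `c₁ = c₂ = 1`). -/
theorem reconstruction_of_sigma
    {Λ : Type*} (K : Λ → Type*)
    [∀ l, TopologicalSpace (K l)] [∀ l, LocallyCompactSpace (K l)] [∀ l, T2Space (K l)]
    {I : Λ → Type*} (u : (l : Λ) → I l → C₀(K l, ℂ))
    (hu : ∀ (l : Λ) (v : C₀(K l, ℂ)),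
      Summable (fun i : I l => u l i * star (u l i) * v) ∧
      (∑' i : I l, u l i * star (u l i) * v) = v)
    (x' : (l : Λ) → I l → C₀((Σ l, K l), ℂ))
    (hx' : ∀ (l : Λ) (i : I l) (t : K l), x' l i ⟨l, t⟩ = u l i t)
    (hx'0 : ∀ (l : Λ) (i : I l) (l' : Λ), l' ≠ l → ∀ t : K l', x' l i ⟨l', t⟩ = 0) :
    ∀ x : C₀((Σ l, K l), ℂ),
      (Summable (fun p : Σ l, I l => x' p.1 p.2 * star (x' p.1 p.2) * x) ∧
        (∑' p : Σ l, I l, x' p.1 p.2 * star (x' p.1 p.2) * x) = x) ∧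
      (Summable (fun p : Σ l, I l => star (x' p.1 p.2) * x' p.1 p.2 * (star x * x)) ∧
        (∑' p : Σ l, I l, star (x' p.1 p.2) * x' p.1 p.2 * (star x * x)) = star x * x) := by
  classical
  -- finite partial sums of the squares are bounded by 1 pointwise
  have key_bound : ∀ (l : Λ) (t : K l) (G : Finset (I l)),
      ∑ i ∈ G, Complex.normSq (u l i t) ≤ 1 := by
    intro l t G
    obtain ⟨v, hv⟩ := exists_one_at t
    have h1 : HasSum (fun i : I l => u l i * star (u l i) * v) v := by
      have := (hu l v).1.hasSum
      rwa [(hu l v).2] at this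
    have h2 := hasSum_apply h1 t
    simp only [ZeroAtInftyContinuousMap.coe_mul, Pi.mul_apply,
      ZeroAtInftyContinuousMap.coe_star, Pi.star_apply, hv, mul_one] at h2
    have h3 : HasSum (fun i : I l => ((Complex.normSq (u l i t) : ℝ) : ℂ)) ((1 : ℝ) : ℂ) := by
      rw [Complex.ofReal_one]
      convert h2 using 2 with i
      rw [RCLike.star_def, Complex.mul_conj]
    have h4 : HasSum (fun i : I l => Complex.normSq (u l i t)) 1 :=
      Complex.hasSum_ofReal.mp h3
    exact sum_le_hasSum G (fun i _ => Complex.normSq_nonneg _) h4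
  have key : ∀ y : C₀((Σ l, K l), ℂ),
      HasSum (fun p : Σ l, I l => x' p.1 p.2 * star (x' p.1 p.2) * y) y := by
    intro y
    rw [HasSum, Metric.tendsto_nhds]
    intro ε hε
    refine Filter.eventually_atTop.mpr ?_
    set ε' := ε / 2 with hε'def
    have hε' : 0 < ε' := by positivity
    -- a compact set outside of which y is small
    obtain ⟨C, hCc, hCs⟩ := Filter.mem_cocompact.mp
      (zero_at_infty y (Metric.ball_mem_nhds (0 : ℂ) hε'))
    -- finitely many components meeting C
    obtain ⟨L, hL⟩ := hCc.elim_finite_subcover (fun l => Set.range (Sigma.mk l))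
      (fun l => isOpen_range_sigmaMk) (fun p _ => Set.mem_iUnion.mpr ⟨p.1, ⟨p.2, rfl⟩⟩)
    -- restrictions of y to the components
    let σm : ∀ l, CocompactMap (K l) (Σ l, K l) := fun l =>
      ⟨⟨Sigma.mk l, continuous_sigmaMk⟩, Topology.IsClosedEmbedding.sigmaMk.tendsto_cocompact⟩
    let yl : ∀ l, C₀(K l, ℂ) := fun l => y.comp (σm l)
    have hyl : ∀ l (t : K l), yl l t = y ⟨l, t⟩ := fun l t => rfl
    have hFex : ∀ l, ∃ Fl : Finset (I l), ∀ G, Fl ⊆ G →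
        dist (∑ i ∈ G, u l i * star (u l i) * yl l) (yl l) < ε' := by
      intro l
      have h1 : HasSum (fun i => u l i * star (u l i) * yl l) (yl l) := by
        have := (hu l (yl l)).1.hasSum
        rwa [(hu l (yl l)).2] at this
      obtain ⟨Fl, hFl⟩ := Filter.eventually_atTop.mp (Metric.tendsto_nhds.mp h1 ε' hε')
      exact ⟨Fl, fun G hG => hFl G hG⟩
    choose Fl hFl using hFex
    refine ⟨L.sigma Fl, fun F hF0 => ?_⟩
    rw [dist_eq_norm]
    have hpt : ∀ p : Σ l, K l,
        ‖(∑ q ∈ F, x' q.1 q.2 * star (x' q.1 q.2) * y - y) p‖ ≤ ε' := by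
      rintro ⟨l, t⟩
      have hinj : Set.InjOn (Sigma.mk l : I l → Σ l, I l) ((Sigma.mk l) ⁻¹' ↑F) :=
        Set.injOn_of_injective sigma_mk_injective
      have hval : (∑ q ∈ F, x' q.1 q.2 * star (x' q.1 q.2) * y) ⟨l, t⟩
          = ∑ i ∈ F.preimage (Sigma.mk l) hinj,
              u l i t * star (u l i t) * y ⟨l, t⟩ := by
        rw [ReconAux.sum_apply]
        rw [← Finset.sum_preimage (Sigma.mk l) F hinj
          (fun q => (x' q.1 q.2 * star (x' q.1 q.2) * y) ⟨l, t⟩) ?_]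
        · exact Finset.sum_congr rfl fun i _ => by
            simp [ZeroAtInftyContinuousMap.coe_mul, ZeroAtInftyContinuousMap.coe_star,
              hx' l i t]
        · rintro ⟨l', i⟩ _ hnr
          have hne : l ≠ l' := by
            rintro rfl
            exact hnr ⟨i, rfl⟩
          simp [ZeroAtInftyContinuousMap.coe_mul, ZeroAtInftyContinuousMap.coe_star,
            hx'0 l' i l hne t]
      rw [ZeroAtInftyContinuousMap.coe_sub, Pi.sub_apply, hval]
      by_cases hlL : l ∈ L
      · -- the component is one of the finitely many "large" ones
        have hsub : Fl l ⊆ F.preimage (Sigma.mk l) hinj := by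
          intro i hi
          rw [Finset.mem_preimage]
          exact hF0 (Finset.mem_sigma.mpr ⟨hlL, hi⟩)
        have hd := hFl l _ hsub
        rw [dist_eq_norm] at hd
        calc ‖(∑ i ∈ F.preimage (Sigma.mk l) hinj, u l i t * star (u l i t) * y ⟨l, t⟩)
              - y ⟨l, t⟩‖
            = ‖(∑ i ∈ F.preimage (Sigma.mk l) hinj, u l i * star (u l i) * yl l - yl l) t‖ := by
              rw [ZeroAtInftyContinuousMap.coe_sub, Pi.sub_apply, ReconAux.sum_apply, hyl]
              simp only [ZeroAtInftyContinuousMap.coe_mul, ZeroAtInftyContinuousMap.coe_star,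
                Pi.mul_apply, Pi.star_apply, hyl]
          _ ≤ ‖∑ i ∈ F.preimage (Sigma.mk l) hinj, u l i * star (u l i) * yl l - yl l‖ :=
              norm_apply_le _ t
          _ ≤ ε' := hd.le
      · -- small component: y is small there
        have hnc : (⟨l, t⟩ : Σ l, K l) ∉ C := by
          intro hc
          obtain ⟨l', hl'⟩ := Set.mem_iUnion.mp (hL hc)
          obtain ⟨hl'L, tt, htt⟩ := Set.mem_iUnion.mp hl'
          obtain ⟨rfl, -⟩ := Sigma.mk.inj_iff.mp htt
          exact hlL hl'L
        have hsmall : ‖y ⟨l, t⟩‖ < ε' := by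
          have h5 : y ⟨l, t⟩ ∈ Metric.ball (0 : ℂ) ε' := hCs hnc
          rwa [mem_ball_zero_iff] at h5
        set G := F.preimage (Sigma.mk l) hinj with hG
        set s := ∑ i ∈ G, Complex.normSq (u l i t) with hs
        have hs0 : 0 ≤ s := Finset.sum_nonneg fun i _ => Complex.normSq_nonneg _
        have hs1 : s ≤ 1 := key_bound l t G
        have hsum : (∑ i ∈ G, u l i t * star (u l i t) * y ⟨l, t⟩)
            = (s : ℂ) * y ⟨l, t⟩ := by
          rw [hs]
          push_cast
          rw [Finset.sum_mul]
          refine Finset.sum_congr rfl fun i _ => ?_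
          rw [RCLike.star_def, Complex.mul_conj]
        rw [hsum]
        have : (s : ℂ) * y ⟨l, t⟩ - y ⟨l, t⟩ = ((s - 1 : ℝ) : ℂ) * y ⟨l, t⟩ := by
          push_cast
          ring
        rw [this, norm_mul, Complex.norm_real]
        have habs : ‖s - 1‖ ≤ 1 := by
          rw [Real.norm_eq_abs]
          rw [abs_le]
          constructor <;> linarith
        calc ‖s - 1‖ * ‖y ⟨l, t⟩‖ ≤ 1 * ‖y ⟨l, t⟩‖ :=
              mul_le_mul_of_nonneg_right habs (norm_nonneg _)
          _ = ‖y ⟨l, t⟩‖ := one_mul _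
          _ ≤ ε' := hsmall.le
    calc ‖(∑ q ∈ F, x' q.1 q.2 * star (x' q.1 q.2) * y) - y‖ ≤ ε' :=
          norm_le_of_forall hε'.le hpt
      _ < ε := by rw [hε'def]; linarith
  intro x
  refine ⟨⟨(key x).summable, (key x).tsum_eq⟩, ?_⟩
  have h2 : (fun p : Σ l, I l => star (x' p.1 p.2) * x' p.1 p.2 * (star x * x)) =
      fun p : Σ l, I l => x' p.1 p.2 * star (x' p.1 p.2) * (star x * x) := by
    funext p
    rw [mul_comm (star (x' p.1 p.2))]
  rw [h2]
  exact ⟨(key (star x * x)).summable, (key (star x * x)).tsum_eq⟩
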